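/- Let k > 2 be an integer and let x^k + F be a rigid defining series with tube model, F = Σ_{j+l ≥ k+1} A_{j,l} x^j y^l ∈ ℝ⟦x,y⟧. Then there exist unique complex numbers f_i (i ≥ 2) and g_i (i ≥ k+1) and a unique rigid defining series x^k + F* in rigid t-normal form such that, setting f(z) = Σ_{i ≥ 2} f_i z^i and g(z) = Σ_{i ≥ k+1} g_i z^i, the identity (x + Re f(x+iy))^k + F*(x + Re f(x+iy), y + Im f(x+iy)) = x^k + F(x,y) + Im g(x+iy) holds in ℝ⟦x,y⟧. -/

import Mathlib

noncomputable section

open MvPowerSeries Finsupp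

/-- Formal substitution of the family `a` into `f`, defined coefficientwise by a `finsum`
(which has the correct value whenever each `a i` has zero constant term). -/
def mSubst {σ τ R : Type*} [CommSemiring R] (a : σ → MvPowerSeries τ R)
    (f : MvPowerSeries σ R) : MvPowerSeries τ R :=
  fun d => finsum fun e : σ →₀ ℕ =>
    MvPowerSeries.coeff (R := R) e f * MvPowerSeries.coeff (R := R) d (e.prod fun i n => (a i) ^ n)

/-- Substitution of a multivariate series into a one-variable series. -/
def oSubst {τ R : Type*} [CommSemiring R] (a : MvPowerSeries τ R) (h : PowerSeries R) :
    MvPowerSeries τ R :=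
  mSubst (fun _ : Unit => a) h

/-- Coefficientwise real part. -/
def reP {σ : Type*} (h : MvPowerSeries σ ℂ) : MvPowerSeries σ ℝ :=
  fun d => (MvPowerSeries.coeff (R := ℂ) d h).re

/-- Coefficientwise imaginary part. -/
def imP {σ : Type*} (h : MvPowerSeries σ ℂ) : MvPowerSeries σ ℝ :=
  fun d => (MvPowerSeries.coeff (R := ℂ) d h).im

/-- The coefficient of `x^j y^l` in `F ∈ ℝ⟦x,y⟧`. -/
def cfxy (F : MvPowerSeries (Fin 2) ℝ) (j l : ℕ) : ℝ :=
  MvPowerSeries.coeff (R := ℝ) (single 0 j + single 1 l) F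

/-- The series `x + iy ∈ ℂ⟦x,y⟧`. -/
def zxy : MvPowerSeries (Fin 2) ℂ :=
  X 0 + MvPowerSeries.C (σ := Fin 2) (R := ℂ) Complex.I * X 1

/-- `F` is the tail of a rigid defining series with tube model, i.e.
`x^k + F = x^k + Σ_{j+l ≥ k+1} A_{j,l} x^j y^l`. -/
def IsRigidTail (k : ℕ) (F : MvPowerSeries (Fin 2) ℝ) : Prop :=
  ∀ j l : ℕ, j + l ≤ k → cfxy F j l = 0

/-- `x^k + F` is in rigid t-normal form: `A_{0,l} = A_{1,l} = A_{k-1,l} = A_{k,l} = 0`. -/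
def IsRigidTNormal (k : ℕ) (F : MvPowerSeries (Fin 2) ℝ) : Prop :=
  ∀ j l : ℕ, k + 1 ≤ j + l → (j = 0 ∨ j = 1 ∨ j = k - 1 ∨ j = k) → cfxy F j l = 0

/-! ### Preliminaries on degrees and coefficient filtrations -/

def dg (d : Fin 2 →₀ ℕ) : ℕ := d 0 + d 1

lemma dg_add (d e : Fin 2 →₀ ℕ) : dg (d + e) = dg d + dg e := by
  simp [dg]; ring

lemma fin2_eq (d : Fin 2 →₀ ℕ) : d = single 0 (d 0) + single 1 (d 1) := by
  ext i; fin_cases i <;> simp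

lemma pair_fst (j l : ℕ) : (single 0 j + single 1 l : Fin 2 →₀ ℕ) 0 = j := by simp

lemma pair_snd (j l : ℕ) : (single 0 j + single 1 l : Fin 2 →₀ ℕ) 1 = l := by simp

lemma dg_pair (j l : ℕ) : dg (single 0 j + single 1 l : Fin 2 →₀ ℕ) = j + l := by
  simp [dg]

lemma coeff_apply' {σ R : Type*} [Semiring R] (f : MvPowerSeries σ R) (d : σ →₀ ℕ) :
    MvPowerSeries.coeff (R := R) d f = f d := rfl

lemma coeff_eq_cfxy (G : MvPowerSeries (Fin 2) ℝ) (d : Fin 2 →₀ ℕ) :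
    MvPowerSeries.coeff (R := ℝ) d G = cfxy G (d 0) (d 1) := by
  unfold cfxy; rw [← fin2_eq d]

section OrdGe

variable {R : Type*} [CommRing R]

def OrdGe (α : ℕ) (a : MvPowerSeries (Fin 2) R) : Prop :=
  ∀ d, dg d < α → MvPowerSeries.coeff (R := R) d a = 0

def BddLe (β : ℕ) (a : MvPowerSeries (Fin 2) R) : Prop :=
  ∀ d, β < dg d → MvPowerSeries.coeff (R := R) d a = 0

lemma OrdGe.mono {α α' : ℕ} {a : MvPowerSeries (Fin 2) R} (h : OrdGe α a) (hle : α' ≤ α) :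
    OrdGe α' a := fun d hd => h d (lt_of_lt_of_le hd hle)

lemma OrdGe.zero (α : ℕ) : OrdGe α (0 : MvPowerSeries (Fin 2) R) := by
  intro d _; simp

lemma OrdGe.add {α : ℕ} {a b : MvPowerSeries (Fin 2) R} (ha : OrdGe α a) (hb : OrdGe α b) :
    OrdGe α (a + b) := by
  intro d hd; rw [map_add, ha d hd, hb d hd, add_zero]

lemma OrdGe.mul {α β : ℕ} {a b : MvPowerSeries (Fin 2) R} (ha : OrdGe α a) (hb : OrdGe β b) :
    OrdGe (α + β) (a * b) := by
  classical
  intro d hd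
  rw [coeff_mul]
  apply Finset.sum_eq_zero
  rintro ⟨p, q⟩ hpq
  rw [Finset.HasAntidiagonal.mem_antidiagonal] at hpq
  have hdg : dg p + dg q = dg d := by rw [← dg_add, hpq]
  rcases lt_or_ge (dg p) α with h | h
  · rw [ha p h, zero_mul]
  · have : dg q < β := by omega
    rw [hb q this, mul_zero]

lemma OrdGe.pow {α : ℕ} {a : MvPowerSeries (Fin 2) R} (ha : OrdGe α a) (s : ℕ) :
    OrdGe (s * α) (a ^ s) := by
  induction s with
  | zero => intro d hd; omega
  | succ n ih =>
      rw [pow_succ]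
      have := ih.mul ha
      simpa [Nat.succ_mul] using this

lemma BddLe.mul {α β : ℕ} {a b : MvPowerSeries (Fin 2) R} (ha : BddLe α a) (hb : BddLe β b) :
    BddLe (α + β) (a * b) := by
  classical
  intro d hd
  rw [coeff_mul]
  apply Finset.sum_eq_zero
  rintro ⟨p, q⟩ hpq
  rw [Finset.HasAntidiagonal.mem_antidiagonal] at hpq
  have hdg : dg p + dg q = dg d := by rw [← dg_add, hpq]
  rcases lt_or_ge α (dg p) with h | h
  · rw [ha p h, zero_mul]
  · have : β < dg q := by omega
    rw [hb q this, mul_zero]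

lemma BddLe.pow {α : ℕ} {a : MvPowerSeries (Fin 2) R} (ha : BddLe α a) (s : ℕ) :
    BddLe (s * α) (a ^ s) := by
  induction s with
  | zero =>
      intro d hd
      simp only [pow_zero]
      rw [show (1 : MvPowerSeries (Fin 2) R) = monomial (R := R) 0 1 from rfl, coeff_monomial]
      rw [if_neg]
      rintro rfl
      simp [dg] at hd
  | succ n ih =>
      rw [pow_succ]
      have := ih.mul ha
      simpa [Nat.succ_mul] using this

lemma mul_sub_ordGe {p q α β r : ℕ} {a a' b b' : MvPowerSeries (Fin 2) R}
    (hpa : OrdGe p (a - a')) (hqb : OrdGe q (b - b'))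
    (ha' : OrdGe α a') (hb : OrdGe β b)
    (h1 : r ≤ p + β) (h2 : r ≤ α + q) :
    OrdGe r (a * b - a' * b') := by
  have : a * b - a' * b' = (a - a') * b + a' * (b - b') := by ring
  rw [this]
  exact ((hpa.mul hb).mono h1).add ((ha'.mul hqb).mono h2)

lemma pow_sub_ordGe' {p α : ℕ} {a a' : MvPowerSeries (Fin 2) R}
    (hd : OrdGe p (a - a')) (ha : OrdGe α a) (ha' : OrdGe α a') (s : ℕ) :
    OrdGe (p + s * α) (a ^ (s + 1) - a' ^ (s + 1)) := by
  induction s with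
  | zero => simpa using hd
  | succ n ih =>
      have key : a ^ (n + 2) - a' ^ (n + 2)
          = (a - a') * a ^ (n + 1) + a' * (a ^ (n + 1) - a' ^ (n + 1)) := by ring
      rw [key]
      have h1 : OrdGe (p + (n + 1) * α) ((a - a') * a ^ (n + 1)) :=
        hd.mul (ha.pow (n + 1))
      have h2 : OrdGe (p + (n + 1) * α) (a' * (a ^ (n + 1) - a' ^ (n + 1))) :=
        (ha'.mul ih).mono (by rw [Nat.succ_mul]; omega)
      exact h1.add h2

lemma pow_sub_ordGe {p : ℕ} (hp : 1 ≤ p) {a a' : MvPowerSeries (Fin 2) R}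
    (hd : OrdGe p (a - a')) (ha : OrdGe 1 a) (ha' : OrdGe 1 a') (s : ℕ) :
    OrdGe (p + s - 1) (a ^ s - a' ^ s) := by
  cases s with
  | zero => simpa using OrdGe.zero _
  | succ n =>
      have := pow_sub_ordGe' hd ha ha' n
      exact this.mono (by omega)

lemma mixpow_sub_ordGe {p : ℕ} (hp : 1 ≤ p) {a a' b b' : MvPowerSeries (Fin 2) R}
    (hda : OrdGe p (a - a')) (ha : OrdGe 1 a) (ha' : OrdGe 1 a')
    (hdb : OrdGe p (b - b')) (hb : OrdGe 1 b) (hb' : OrdGe 1 b')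
    (e0 e1 : ℕ) :
    OrdGe (p + e0 + e1 - 1) (a ^ e0 * b ^ e1 - a' ^ e0 * b' ^ e1) := by
  have h1 : OrdGe (p + e0 - 1) (a ^ e0 - a' ^ e0) := pow_sub_ordGe hp hda ha ha' e0
  have h2 : OrdGe (p + e1 - 1) (b ^ e1 - b' ^ e1) := pow_sub_ordGe hp hdb hb hb' e1
  have hae : OrdGe e0 (a' ^ e0) := by simpa using ha'.pow e0
  have hbe : OrdGe e1 (b ^ e1) := by simpa using hb.pow e1
  exact mul_sub_ordGe h1 h2 hae hbe (by omega) (by omega)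

end OrdGe

/-! ### Coefficients of powers of `zxy` and of `oSubst zxy` -/

lemma Xpow_mul_Xpow (j l : ℕ) {R : Type*} [CommRing R] :
    (X 0 : MvPowerSeries (Fin 2) R) ^ j * X 1 ^ l
      = monomial (R := R) (single 0 j + single 1 l) 1 := by
  rw [X_pow_eq, X_pow_eq, monomial_mul_monomial, one_mul]

lemma ordGe_X {R : Type*} [CommRing R] (s : Fin 2) : OrdGe 1 (X s : MvPowerSeries (Fin 2) R) := by
  intro d hd
  classical
  rw [coeff_X, if_neg]
  rintro rfl
  simp [dg] at hd
  rcases hd with ⟨h1, h2⟩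
  fin_cases s <;> simp_all

lemma ordGe_zxy : OrdGe 1 zxy := by
  have h1 : OrdGe 1 (MvPowerSeries.C (σ := Fin 2) (R := ℂ) Complex.I * X 1) := by
    intro d hd
    rw [coeff_C_mul, (ordGe_X (R := ℂ) 1) d hd, mul_zero]
  exact (ordGe_X 0).add h1

lemma bddLe_zxy : BddLe 1 zxy := by
  intro d hd
  rw [zxy, map_add, coeff_X, coeff_C_mul, coeff_X]
  rw [if_neg, if_neg]
  · simp
  · rintro rfl; simp [dg] at hd
  · rintro rfl; simp [dg] at hd

lemma zxy_pow_ne {n : ℕ} {d : Fin 2 →₀ ℕ} (h : dg d ≠ n) :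
    MvPowerSeries.coeff (R := ℂ) d (zxy ^ n) = 0 := by
  rcases lt_or_gt_of_ne h with h | h
  · exact (ordGe_zxy.pow n) d (by omega)
  · exact (bddLe_zxy.pow n) d (by omega)

lemma zxy_pow_coeff {n : ℕ} {d : Fin 2 →₀ ℕ} (h : dg d = n) :
    MvPowerSeries.coeff (R := ℂ) d (zxy ^ n) = (n.choose (d 0)) * Complex.I ^ (d 1) := by
  classical
  rw [zxy, add_pow, map_sum]
  have key : ∀ t ∈ Finset.range (n + 1),
      MvPowerSeries.coeff (R := ℂ) d ((X 0 : MvPowerSeries (Fin 2) ℂ) ^ t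
          * (MvPowerSeries.C (σ := Fin 2) (R := ℂ) Complex.I * X 1) ^ (n - t)
          * (n.choose t : MvPowerSeries (Fin 2) ℂ))
        = if t = d 0 then (n.choose (d 0) : ℂ) * Complex.I ^ (d 1) else 0 := by
    intro t ht
    rw [Finset.mem_range] at ht
    have e1 : (X 0 : MvPowerSeries (Fin 2) ℂ) ^ t
          * (MvPowerSeries.C (σ := Fin 2) (R := ℂ) Complex.I * X 1) ^ (n - t)
          * (n.choose t : MvPowerSeries (Fin 2) ℂ)
        = MvPowerSeries.C (σ := Fin 2) (R := ℂ) (Complex.I ^ (n - t) * (n.choose t : ℂ))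
          * monomial (R := ℂ) (single 0 t + single 1 (n - t)) 1 := by
      rw [mul_pow, ← map_pow, ← Xpow_mul_Xpow, ← map_natCast (MvPowerSeries.C (σ := Fin 2) (R := ℂ)),
        map_mul]
      ring
    rw [e1, coeff_C_mul, coeff_monomial]
    by_cases hc : t = d 0
    · have h' : d 0 + d 1 = n := by simpa [dg] using h
      have hd1 : n - t = d 1 := by omega
      have hdd : d = single 0 t + single 1 (n - t) := by
        rw [hd1, hc]; exact fin2_eq d
      rw [if_pos hdd, if_pos hc, hd1, hc]
      ring
    · rw [if_neg, if_neg hc, mul_zero]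
      intro hd
      apply hc
      have := congrArg (fun e : Fin 2 →₀ ℕ => e 0) hd
      simpa using this.symm
  rw [Finset.sum_congr rfl key, Finset.sum_ite_eq' (Finset.range (n+1)) (d 0)]
  rw [if_pos]
  rw [Finset.mem_range]
  simp [dg] at h; omega

lemma coeff_oSubst (h : PowerSeries ℂ) (d : Fin 2 →₀ ℕ) :
    MvPowerSeries.coeff (R := ℂ) d (oSubst zxy h)
      = PowerSeries.coeff (R := ℂ) (dg d) h * ((dg d).choose (d 0)) * Complex.I ^ (d 1) := by
  classical
  rw [coeff_apply']
  unfold oSubst mSubst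
  have hprod : ∀ e : Unit →₀ ℕ, (e.prod fun _ n => zxy ^ n) = zxy ^ (e ()) := by
    intro e
    rw [Finsupp.prod_fintype _ _ (fun i => pow_zero zxy)]
    exact Fintype.prod_unique _
  have hsingle : ∀ e : Unit →₀ ℕ, e ≠ single () (dg d) →
      MvPowerSeries.coeff (R := ℂ) e h * MvPowerSeries.coeff (R := ℂ) d (e.prod fun _ n => zxy ^ n) = 0 := by
    intro e he
    rw [hprod e, zxy_pow_ne, mul_zero]
    intro hdg
    apply he
    ext
    simpa using hdg.symm
  rw [finsum_eq_single _ (single () (dg d)) hsingle, hprod]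
  rw [single_eq_same, zxy_pow_coeff rfl, ← mul_assoc]
  rfl

/-! ### Coefficients of `reP/imP (oSubst zxy f)` -/

lemma coeff_reP_oSubst (f : PowerSeries ℂ) (d : Fin 2 →₀ ℕ) :
    MvPowerSeries.coeff (R := ℝ) d (reP (oSubst zxy f))
      = (PowerSeries.coeff (R := ℂ) (dg d) f * ((dg d).choose (d 0)) * Complex.I ^ (d 1)).re := by
  have : MvPowerSeries.coeff (R := ℝ) d (reP (oSubst zxy f))
      = (MvPowerSeries.coeff (R := ℂ) d (oSubst zxy f)).re := rfl
  rw [this, coeff_oSubst]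

lemma coeff_imP_oSubst (f : PowerSeries ℂ) (d : Fin 2 →₀ ℕ) :
    MvPowerSeries.coeff (R := ℝ) d (imP (oSubst zxy f))
      = (PowerSeries.coeff (R := ℂ) (dg d) f * ((dg d).choose (d 0)) * Complex.I ^ (d 1)).im := by
  have : MvPowerSeries.coeff (R := ℝ) d (imP (oSubst zxy f))
      = (MvPowerSeries.coeff (R := ℂ) d (oSubst zxy f)).im := rfl
  rw [this, coeff_oSubst]

lemma ordGe_reP {f : PowerSeries ℂ} (hf : ∀ i ≤ 1, PowerSeries.coeff (R := ℂ) i f = 0) :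
    OrdGe 2 (reP (oSubst zxy f)) := by
  intro d hd
  rw [coeff_reP_oSubst, hf (dg d) (by omega)]
  simp

lemma ordGe_imP {f : PowerSeries ℂ} (hf : ∀ i ≤ 1, PowerSeries.coeff (R := ℂ) i f = 0) :
    OrdGe 2 (imP (oSubst zxy f)) := by
  intro d hd
  rw [coeff_imP_oSubst, hf (dg d) (by omega)]
  simp

lemma agr_reP {n : ℕ} {f f' : PowerSeries ℂ}
    (h : ∀ i < n, PowerSeries.coeff (R := ℂ) i f = PowerSeries.coeff (R := ℂ) i f') :
    OrdGe n (reP (oSubst zxy f) - reP (oSubst zxy f')) := by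
  intro d hd
  rw [map_sub, coeff_reP_oSubst, coeff_reP_oSubst, h (dg d) hd, sub_self]

lemma agr_imP {n : ℕ} {f f' : PowerSeries ℂ}
    (h : ∀ i < n, PowerSeries.coeff (R := ℂ) i f = PowerSeries.coeff (R := ℂ) i f') :
    OrdGe n (imP (oSubst zxy f) - imP (oSubst zxy f')) := by
  intro d hd
  rw [map_sub, coeff_imP_oSubst, coeff_imP_oSubst, h (dg d) hd, sub_self]

/-! ### Finite-sum form for `mSubst` -/

open scoped Classical in
def Sfin (m : ℕ) : Finset (Fin 2 →₀ ℕ) :=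
  ((Finset.range (m+1)) ×ˢ (Finset.range (m+1))).image
    (fun p : ℕ × ℕ => single 0 p.1 + single 1 p.2) |>.filter (fun e => dg e ≤ m)

lemma mem_Sfin {m : ℕ} {e : Fin 2 →₀ ℕ} : e ∈ Sfin m ↔ dg e ≤ m := by
  classical
  constructor
  · intro h
    rw [Sfin, Finset.mem_filter] at h
    convert h.2 using 2
  · intro h
    rw [Sfin, Finset.mem_filter]
    refine ⟨Finset.mem_image.2 ⟨(e 0, e 1), ?_, (fin2_eq e).symm⟩, by convert h using 2⟩
    simp only [Finset.mem_product, Finset.mem_range]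
    constructor <;> simp [dg] at h <;> omega

lemma coeff_mSubst {a b : MvPowerSeries (Fin 2) ℝ}
    (ha : OrdGe 1 a) (hb : OrdGe 1 b) (G : MvPowerSeries (Fin 2) ℝ) (d : Fin 2 →₀ ℕ) :
    MvPowerSeries.coeff (R := ℝ) d (mSubst ![a, b] G)
      = ∑ e ∈ Sfin (dg d),
          MvPowerSeries.coeff (R := ℝ) e G * MvPowerSeries.coeff (R := ℝ) d (a ^ (e 0) * b ^ (e 1)) := by
  classical
  rw [coeff_apply']
  unfold mSubst
  have hprod : ∀ e : Fin 2 →₀ ℕ,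
      (e.prod fun i n => (![a, b] i) ^ n) = a ^ (e 0) * b ^ (e 1) := by
    intro e
    rw [Finsupp.prod_fintype _ _ (fun i => pow_zero _), Fin.prod_univ_two]
    simp
  have hsupp : (Function.support fun e : Fin 2 →₀ ℕ =>
      MvPowerSeries.coeff (R := ℝ) e G * MvPowerSeries.coeff (R := ℝ) d (e.prod fun i n => (![a, b] i) ^ n))
      ⊆ ↑(Sfin (dg d)) := by
    intro e he
    rw [Function.mem_support] at he
    rw [Finset.mem_coe, mem_Sfin]
    by_contra hgt
    push_neg at hgt
    apply he
    rw [hprod e]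
    have h0 : OrdGe (e 0 + e 1) (a ^ (e 0) * b ^ (e 1)) := by
      have := (ha.pow (e 0)).mul (hb.pow (e 1))
      simpa using this
    rw [h0 d (by simpa [dg] using hgt), mul_zero]
  rw [finsum_eq_sum_of_support_subset _ hsupp]
  exact Finset.sum_congr rfl fun e _ => by rw [hprod e]

/-! ### The transformation map and its top-degree linearization -/

def Pfun (k : ℕ) (f g : PowerSeries ℂ) (Fs : MvPowerSeries (Fin 2) ℝ) :
    MvPowerSeries (Fin 2) ℝ :=
  (X 0 + reP (oSubst zxy f)) ^ k
    + mSubst ![X 0 + reP (oSubst zxy f), X 1 + imP (oSubst zxy f)] Fs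
    - X 0 ^ k - imP (oSubst zxy g)

lemma sub_index {k : ℕ} {d : Fin 2 →₀ ℕ} (h : k - 1 ≤ d 0) :
    d - single 0 (k - 1) = single 0 (d 0 - (k-1)) + single 1 (d 1) := by
  ext i
  fin_cases i <;> simp [tsub_apply]

/-- difference of the pure powers `(X 0 + u) ^ k`. -/
lemma Q1_diff {k n m : ℕ} (hk : 2 < k) (hn : 2 ≤ n) (hm : m + 1 = n + k)
    {u u' : MvPowerSeries (Fin 2) ℝ} (hu : OrdGe 2 u) (hu' : OrdGe 2 u')
    (hdu : OrdGe n (u - u')) {d : Fin 2 →₀ ℕ} (hd : dg d = m) :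
    MvPowerSeries.coeff (R := ℝ) d ((X 0 + u) ^ k) - MvPowerSeries.coeff (R := ℝ) d ((X 0 + u') ^ k)
      = k * (if k - 1 ≤ d 0 then
          MvPowerSeries.coeff (R := ℝ) (single 0 (d 0 - (k-1)) + single 1 (d 1)) (u - u') else 0) := by
  classical
  rw [add_pow, add_pow, map_sum, map_sum, ← Finset.sum_sub_distrib]
  have hterm : ∀ (w : MvPowerSeries (Fin 2) ℝ) (t : ℕ),
      (X 0 : MvPowerSeries (Fin 2) ℝ) ^ t * w ^ (k - t)
          * ((k.choose t : ℕ) : MvPowerSeries (Fin 2) ℝ)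
        = MvPowerSeries.C (σ := Fin 2) (R := ℝ) (k.choose t : ℝ)
            * (monomial (R := ℝ) (single 0 t) 1 * w ^ (k - t)) := by
    intro w t
    rw [← map_natCast (MvPowerSeries.C (σ := Fin 2) (R := ℝ)), X_pow_eq]
    ring
  have hd' : d 0 + d 1 = m := by simpa [dg] using hd
  have key : ∀ t ∈ Finset.range (k + 1),
      MvPowerSeries.coeff (R := ℝ) d ((X 0 : MvPowerSeries (Fin 2) ℝ) ^ t * u ^ (k - t)
            * (k.choose t : MvPowerSeries (Fin 2) ℝ))
        - MvPowerSeries.coeff (R := ℝ) d ((X 0 : MvPowerSeries (Fin 2) ℝ) ^ t * u' ^ (k - t)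
            * (k.choose t : MvPowerSeries (Fin 2) ℝ))
        = if t = k - 1 then
            (k : ℝ) * (if k - 1 ≤ d 0 then
              MvPowerSeries.coeff (R := ℝ) (single 0 (d 0 - (k-1)) + single 1 (d 1)) (u - u') else 0)
          else 0 := by
    intro t ht
    rw [Finset.mem_range] at ht
    rw [hterm u t, hterm u' t, coeff_C_mul, coeff_C_mul, coeff_monomial_mul, coeff_monomial_mul,
      ← mul_sub]
    rcases Nat.lt_trichotomy t (k - 1) with hlt | heq | hgt
    · -- `s := k - t ≥ 2` : the difference of the power parts has order `> m`
      rw [if_neg (show ¬ t = k - 1 by omega)]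
      have hsub : OrdGe (n + (k - t - 1) * 2) (u ^ (k - t) - u' ^ (k - t)) := by
        have h2 := pow_sub_ordGe' hdu hu hu' (k - t - 1)
        have hkt : k - t - 1 + 1 = k - t := by omega
        rwa [hkt] at h2
      by_cases hle : single 0 t ≤ d
      · rw [if_pos hle, if_pos hle, one_mul, one_mul]
        have ht0 : t ≤ d 0 := by simpa using (Finsupp.le_def.mp hle) 0
        have hdg' : dg (d - single 0 t) < n + (k - t - 1) * 2 := by
          have hh : dg (d - single 0 t) = d 0 - t + d 1 := by
            simp [dg, tsub_apply]
          omega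
        rw [show MvPowerSeries.coeff (R := ℝ) (d - single 0 t) (u ^ (k-t))
              - MvPowerSeries.coeff (R := ℝ) (d - single 0 t) (u' ^ (k-t))
            = MvPowerSeries.coeff (R := ℝ) (d - single 0 t) (u ^ (k-t) - u' ^ (k-t))
            from (map_sub _ _ _).symm, hsub _ hdg', mul_zero]
      · rw [if_neg hle, if_neg hle, sub_self, mul_zero]
    · -- `t = k - 1` : the linear term
      rw [if_pos heq, heq]
      have hs1 : k - (k - 1) = 1 := by omega
      rw [hs1, pow_one, pow_one]
      have hch : (k.choose (k-1) : ℝ) = (k : ℝ) := by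
        rw [show k - 1 = k - 1 from rfl, Nat.choose_symm (by omega : 1 ≤ k), Nat.choose_one_right]
      by_cases hle : single 0 (k-1) ≤ d
      · have hle' : k - 1 ≤ d 0 := by simpa using (Finsupp.le_def.mp hle) 0
        rw [if_pos hle, if_pos hle, one_mul, one_mul, if_pos hle',
          show MvPowerSeries.coeff (R := ℝ) (d - single 0 (k-1)) u
              - MvPowerSeries.coeff (R := ℝ) (d - single 0 (k-1)) u'
            = MvPowerSeries.coeff (R := ℝ) (d - single 0 (k-1)) (u - u') from (map_sub _ _ _).symm,
          sub_index hle', hch]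
      · have hle' : ¬ (k - 1 ≤ d 0) := fun hc => hle (single_le_iff.mpr hc)
        rw [if_neg hle, if_neg hle, sub_self, mul_zero, if_neg hle', mul_zero]
    · -- `t = k` : identical terms
      rw [if_neg (show ¬ t = k - 1 by omega)]
      have htk : k - t = 0 := by omega
      rw [htk, pow_zero, pow_zero, sub_self, mul_zero]
  rw [Finset.sum_congr rfl key, Finset.sum_ite_eq' (Finset.range (k+1)) (k-1)]
  rw [if_pos (by rw [Finset.mem_range]; omega)]

/-- difference of the substituted tails. -/
lemma Q2_diff {k n m : ℕ} (hk : 2 < k) (hn : 2 ≤ n) (hm : m + 1 = n + k)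
    {u v u' v' : MvPowerSeries (Fin 2) ℝ}
    (hu : OrdGe 2 u) (hv : OrdGe 2 v) (hu' : OrdGe 2 u') (hv' : OrdGe 2 v')
    (hdu : OrdGe n (u - u')) (hdv : OrdGe n (v - v'))
    {Fs Fs' : MvPowerSeries (Fin 2) ℝ} (hFt : IsRigidTail k Fs) (hFt' : IsRigidTail k Fs')
    (hFa : ∀ e : Fin 2 →₀ ℕ, dg e < m → MvPowerSeries.coeff (R := ℝ) e Fs = MvPowerSeries.coeff (R := ℝ) e Fs')
    {d : Fin 2 →₀ ℕ} (hd : dg d = m) :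
    MvPowerSeries.coeff (R := ℝ) d (mSubst ![X 0 + u, X 1 + v] Fs)
        - MvPowerSeries.coeff (R := ℝ) d (mSubst ![X 0 + u', X 1 + v'] Fs')
      = MvPowerSeries.coeff (R := ℝ) d Fs - MvPowerSeries.coeff (R := ℝ) d Fs' := by
  classical
  subst hd
  have hDd : dg d = d 0 + d 1 := rfl
  have hXu : OrdGe 1 (X 0 + u) := (ordGe_X 0).add (hu.mono (by omega))
  have hXv : OrdGe 1 (X 1 + v) := (ordGe_X 1).add (hv.mono (by omega))
  have hXu' : OrdGe 1 (X 0 + u') := (ordGe_X 0).add (hu'.mono (by omega))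
  have hXv' : OrdGe 1 (X 1 + v') := (ordGe_X 1).add (hv'.mono (by omega))
  rw [coeff_mSubst hXu hXv, coeff_mSubst hXu' hXv', ← Finset.sum_sub_distrib]
  have key : ∀ e ∈ Sfin (dg d),
      MvPowerSeries.coeff (R := ℝ) e Fs * MvPowerSeries.coeff (R := ℝ) d ((X 0 + u) ^ (e 0) * (X 1 + v) ^ (e 1))
        - MvPowerSeries.coeff (R := ℝ) e Fs'
            * MvPowerSeries.coeff (R := ℝ) d ((X 0 + u') ^ (e 0) * (X 1 + v') ^ (e 1))
      = if e = d then MvPowerSeries.coeff (R := ℝ) d Fs - MvPowerSeries.coeff (R := ℝ) d Fs' else 0 := by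
    intro e he
    rw [mem_Sfin] at he
    have hDe : dg e = e 0 + e 1 := rfl
    rcases le_or_gt (dg e) k with hsk | hsk
    · -- low-degree `e` : tail coefficients vanish
      have h1 : MvPowerSeries.coeff (R := ℝ) e Fs = 0 := by
        rw [coeff_eq_cfxy]; exact hFt _ _ (by simpa [dg] using hsk)
      have h2 : MvPowerSeries.coeff (R := ℝ) e Fs' = 0 := by
        rw [coeff_eq_cfxy]; exact hFt' _ _ (by simpa [dg] using hsk)
      rw [h1, h2, zero_mul, zero_mul, sub_self, if_neg]
      rintro rfl
      omega
    rcases lt_or_eq_of_le he with hsm | hsm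
    · -- middle degrees : the two substituted products agree in degree `m`
      have hFe : MvPowerSeries.coeff (R := ℝ) e Fs = MvPowerSeries.coeff (R := ℝ) e Fs' := hFa e hsm
      have hprod : MvPowerSeries.coeff (R := ℝ) d ((X 0 + u) ^ (e 0) * (X 1 + v) ^ (e 1))
          = MvPowerSeries.coeff (R := ℝ) d ((X 0 + u') ^ (e 0) * (X 1 + v') ^ (e 1)) := by
        have hdiff := mixpow_sub_ordGe (p := n) (by omega)
          (by rw [add_sub_add_left_eq_sub]; exact hdu) hXu hXu'
          (by rw [add_sub_add_left_eq_sub]; exact hdv) hXv hXv' (e 0) (e 1)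
        have := hdiff d (by omega)
        rw [map_sub] at this
        linarith
      rw [hFe, hprod, ← sub_mul, sub_self, zero_mul, if_neg]
      rintro rfl
      omega
    · -- top degree : only the monomial part contributes
      have hmono : ∀ (w z : MvPowerSeries (Fin 2) ℝ), OrdGe 2 w → OrdGe 2 z →
          MvPowerSeries.coeff (R := ℝ) d ((X 0 + w) ^ (e 0) * (X 1 + z) ^ (e 1))
            = if d = e then 1 else 0 := by
        intro w z hw hz
        have hdiff := mixpow_sub_ordGe (p := 2) (by omega)
          (by rw [add_sub_cancel_left]; exact hw) ((ordGe_X 0).add (hw.mono (by omega)))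
          (ordGe_X 0)
          (by rw [add_sub_cancel_left]; exact hz) ((ordGe_X 1).add (hz.mono (by omega)))
          (ordGe_X 1) (e 0) (e 1)
        have h0 := hdiff d (by omega)
        rw [map_sub, sub_eq_zero] at h0
        rw [h0, Xpow_mul_Xpow, coeff_monomial, ← fin2_eq e]
      rw [hmono u v hu hv, hmono u' v' hu' hv']
      by_cases hde : d = e
      · subst hde
        simp
      · have h1 : (if d = e then (1:ℝ) else 0) = 0 := if_neg hde
        rw [h1, if_neg (fun hc : e = d => hde hc.symm), mul_zero, mul_zero, sub_self]
  rw [Finset.sum_congr rfl key, Finset.sum_ite_eq' (Sfin (dg d)) d]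
  rw [if_pos (mem_Sfin.mpr le_rfl)]

/-- The master formula: the degree-`m` coefficient of `Pfun` changes linearly in the
top-degree data. -/
lemma master {k n m : ℕ} (hk : 2 < k) (hn : 2 ≤ n) (hm : m + 1 = n + k)
    {f f' g g' : PowerSeries ℂ} {Fs Fs' : MvPowerSeries (Fin 2) ℝ}
    (hf : ∀ i ≤ 1, PowerSeries.coeff (R := ℂ) i f = 0) (hf' : ∀ i ≤ 1, PowerSeries.coeff (R := ℂ) i f' = 0)
    (hfa : ∀ i < n, PowerSeries.coeff (R := ℂ) i f = PowerSeries.coeff (R := ℂ) i f')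
    (hga : ∀ i < m, PowerSeries.coeff (R := ℂ) i g = PowerSeries.coeff (R := ℂ) i g')
    (hFt : IsRigidTail k Fs) (hFt' : IsRigidTail k Fs')
    (hFa : ∀ e : Fin 2 →₀ ℕ, dg e < m → MvPowerSeries.coeff (R := ℝ) e Fs = MvPowerSeries.coeff (R := ℝ) e Fs')
    {d : Fin 2 →₀ ℕ} (hd : dg d = m) :
    MvPowerSeries.coeff (R := ℝ) d (Pfun k f g Fs) - MvPowerSeries.coeff (R := ℝ) d (Pfun k f' g' Fs')
      = (k : ℝ) * (if k - 1 ≤ d 0 then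
            ((PowerSeries.coeff (R := ℂ) n f - PowerSeries.coeff (R := ℂ) n f')
              * ((n.choose (d 0 - (k-1))) : ℂ) * Complex.I ^ (d 1)).re else 0)
        + (MvPowerSeries.coeff (R := ℝ) d Fs - MvPowerSeries.coeff (R := ℝ) d Fs')
        - ((PowerSeries.coeff (R := ℂ) m g - PowerSeries.coeff (R := ℂ) m g')
            * ((m.choose (d 0)) : ℂ) * Complex.I ^ (d 1)).im := by
  have hu := ordGe_reP hf
  have hu' := ordGe_reP hf'
  have hv := ordGe_imP hf
  have hv' := ordGe_imP hf'
  have hdu := agr_reP hfa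
  have hdv := agr_imP hfa
  have e1 := Q1_diff hk hn hm hu hu' hdu hd
  have e1' : (if k - 1 ≤ d 0 then
        MvPowerSeries.coeff (R := ℝ) (single 0 (d 0 - (k-1)) + single 1 (d 1))
          (reP (oSubst zxy f) - reP (oSubst zxy f')) else 0)
      = (if k - 1 ≤ d 0 then
          ((PowerSeries.coeff (R := ℂ) n f - PowerSeries.coeff (R := ℂ) n f')
            * ((n.choose (d 0 - (k-1))) : ℂ) * Complex.I ^ (d 1)).re else 0) := by
    split_ifs with h
    · have hd' : d 0 + d 1 = m := by simpa [dg] using hd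
      rw [map_sub, coeff_reP_oSubst, coeff_reP_oSubst, dg_pair, pair_fst, pair_snd]
      rw [show d 0 - (k-1) + d 1 = n by omega]
      rw [sub_mul, sub_mul, Complex.sub_re]
    · rfl
  rw [e1'] at e1
  have e2 := Q2_diff hk hn hm hu hv hu' hv' hdu hdv hFt hFt' hFa hd
  have e3 : MvPowerSeries.coeff (R := ℝ) d (imP (oSubst zxy g))
        - MvPowerSeries.coeff (R := ℝ) d (imP (oSubst zxy g'))
      = ((PowerSeries.coeff (R := ℂ) m g - PowerSeries.coeff (R := ℂ) m g')
          * ((m.choose (d 0)) : ℂ) * Complex.I ^ (d 1)).im := by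
    rw [coeff_imP_oSubst, coeff_imP_oSubst, hd, sub_mul, sub_mul, Complex.sub_im]
  unfold Pfun
  simp only [map_add, map_sub]
  linarith [e1, e2, e3]

/-- In degrees `≤ k` all coefficients of `Pfun` vanish. -/
lemma lowP {k : ℕ} (hk : 2 < k) {f g : PowerSeries ℂ} {Fs : MvPowerSeries (Fin 2) ℝ}
    (hf : ∀ i ≤ 1, PowerSeries.coeff (R := ℂ) i f = 0) (hg : ∀ i ≤ k, PowerSeries.coeff (R := ℂ) i g = 0)
    (hFt : IsRigidTail k Fs) {d : Fin 2 →₀ ℕ} (hd : dg d ≤ k) :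
    MvPowerSeries.coeff (R := ℝ) d (Pfun k f g Fs) = 0 := by
  classical
  have hu := ordGe_reP hf
  have hv := ordGe_imP hf
  have hXu : OrdGe 1 (X 0 + reP (oSubst zxy f)) := (ordGe_X 0).add (hu.mono (by omega))
  have hXv : OrdGe 1 (X 1 + imP (oSubst zxy f)) := (ordGe_X 1).add (hv.mono (by omega))
  have hA : MvPowerSeries.coeff (R := ℝ) d ((X 0 + reP (oSubst zxy f)) ^ k)
      = MvPowerSeries.coeff (R := ℝ) d ((X 0 : MvPowerSeries (Fin 2) ℝ) ^ k) := by
    have hdiff := pow_sub_ordGe (p := 2) (by omega)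
      (a := X 0 + reP (oSubst zxy f)) (a' := X 0)
      (by rw [add_sub_cancel_left]; exact hu) hXu (ordGe_X 0) k
    have h0 := hdiff d (by omega)
    rw [map_sub, sub_eq_zero] at h0
    exact h0
  have hS : MvPowerSeries.coeff (R := ℝ) d
      (mSubst ![X 0 + reP (oSubst zxy f), X 1 + imP (oSubst zxy f)] Fs) = 0 := by
    rw [coeff_mSubst hXu hXv]
    apply Finset.sum_eq_zero
    intro e he
    rw [mem_Sfin] at he
    have hDe : dg e = e 0 + e 1 := rfl
    rw [coeff_eq_cfxy, hFt _ _ (by omega), zero_mul]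
  have hG : MvPowerSeries.coeff (R := ℝ) d (imP (oSubst zxy g)) = 0 := by
    rw [coeff_imP_oSubst, hg (dg d) hd]
    simp
  unfold Pfun
  simp only [map_add, map_sub]
  rw [hA, hS, hG]
  ring

/-! ### Complex-linear-algebra helpers -/

def stepz (x y : ℝ) : ℂ := (x : ℂ) + (y : ℂ) * Complex.I

@[simp] lemma stepz_re (x y : ℝ) : (stepz x y).re = x := by simp [stepz]

@[simp] lemma stepz_im (x y : ℝ) : (stepz x y).im = y := by simp [stepz]

lemma negI_mul_I_pow (t : ℕ) : ((-Complex.I) ^ t * Complex.I ^ t : ℂ) = 1 := by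
  rw [← mul_pow, neg_mul, Complex.I_mul_I, neg_neg, one_pow]

lemma im_pair_zero {w : ℂ} {s : ℕ} (h1 : (w * Complex.I ^ s).im = 0)
    (h2 : (w * Complex.I ^ (s+1)).im = 0) : w = 0 := by
  have hre : (w * Complex.I ^ s).re = 0 := by
    have : w * Complex.I ^ (s+1) = (w * Complex.I ^ s) * Complex.I := by
      rw [pow_succ, mul_assoc]
    rw [this, Complex.mul_I_im] at h2
    exact h2
  have hz : w * Complex.I ^ s = 0 := Complex.ext hre h1
  rcases mul_eq_zero.mp hz with h | h
  · exact h
  · exact absurd h (pow_ne_zero _ Complex.I_ne_zero)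

lemma re_pair_zero {w : ℂ} {s : ℕ} (h1 : (w * Complex.I ^ s).re = 0)
    (h2 : (w * Complex.I ^ (s+1)).re = 0) : w = 0 := by
  have him : (w * Complex.I ^ s).im = 0 := by
    have : w * Complex.I ^ (s+1) = (w * Complex.I ^ s) * Complex.I := by
      rw [pow_succ, mul_assoc]
    rw [this, Complex.mul_I_re, neg_eq_zero] at h2
    exact h2
  have hz : w * Complex.I ^ s = 0 := Complex.ext h1 him
  rcases mul_eq_zero.mp hz with h | h
  · exact h
  · exact absurd h (pow_ne_zero _ Complex.I_ne_zero)

/-! ### The recursive construction -/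

def bf (k : ℕ) (s : ℕ → ℂ × ℂ × (ℕ → ℝ)) : PowerSeries ℂ :=
  PowerSeries.mk fun i => if 2 ≤ i then (s (i + k - 1)).1 else 0

def bg (k : ℕ) (s : ℕ → ℂ × ℂ × (ℕ → ℝ)) : PowerSeries ℂ :=
  PowerSeries.mk fun i => if k + 1 ≤ i then (s i).2.1 else 0

def bA (k : ℕ) (s : ℕ → ℂ × ℂ × (ℕ → ℝ)) : MvPowerSeries (Fin 2) ℝ :=
  fun d => if k + 1 ≤ dg d then (s (dg d)).2.2 (d 0) else 0

def trc (s : ℕ → ℂ × ℂ × (ℕ → ℝ)) (m : ℕ) : ℕ → ℂ × ℂ × (ℕ → ℝ) :=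
  fun m' => if m' < m then s m' else 0

def bb (k : ℕ) (F : MvPowerSeries (Fin 2) ℝ) (prev : ℕ → ℂ × ℂ × (ℕ → ℝ)) (m j : ℕ) : ℝ :=
  cfxy F j (m - j) - cfxy (Pfun k (bf k prev) (bg k prev) (bA k prev)) j (m - j)

def step (k : ℕ) (F : MvPowerSeries (Fin 2) ℝ) (prev : ℕ → ℂ × ℂ × (ℕ → ℝ)) (m : ℕ) :
    ℂ × ℂ × (ℕ → ℝ) :=
  let b := bb k F prev m
  let n := m + 1 - k
  let c' : ℂ := stepz (-(b 0)) (-(b 1 / m)) * (-Complex.I) ^ (m - 1)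
  let r0 : ℝ := b (k-1) + (c' * ((m.choose (k-1)) : ℂ) * Complex.I ^ n).im
  let r1 : ℝ := b k + (c' * ((m.choose k) : ℂ) * Complex.I ^ (n-1)).im
  let c : ℂ := stepz (r1 / (k * n)) (-(r0 / k)) * (-Complex.I) ^ (n - 1)
  (c, c', fun j => if j = 0 ∨ j = 1 ∨ j = k - 1 ∨ j = k then 0
      else b j
        - k * (if k - 1 ≤ j then
            (c * ((n.choose (j - (k-1))) : ℂ) * Complex.I ^ (m - j)).re else 0)
        + (c' * ((m.choose j) : ℂ) * Complex.I ^ (m - j)).im)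

def sol (k : ℕ) (F : MvPowerSeries (Fin 2) ℝ) : ℕ → ℂ × ℂ × (ℕ → ℝ)
  | m => if k + 1 ≤ m then
      step k F (fun m' => if h : m' < m then sol k F m' else 0) m else 0
decreasing_by exact h

lemma sol_eq (k : ℕ) (F : MvPowerSeries (Fin 2) ℝ) (m : ℕ) :
    sol k F m = if k + 1 ≤ m then step k F (trc (sol k F) m) m else 0 := by
  rw [sol]
  congr 1

/-- The linear system solved by `step`. -/
lemma step_solves {k m : ℕ} (hk : 2 < k) (hm : k + 1 ≤ m)
    (F : MvPowerSeries (Fin 2) ℝ) (prev : ℕ → ℂ × ℂ × (ℕ → ℝ)) {j : ℕ} (hj : j ≤ m) :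
    (k : ℝ) * (if k - 1 ≤ j then
        ((step k F prev m).1 * (((m + 1 - k).choose (j - (k-1))) : ℂ)
          * Complex.I ^ (m - j)).re else 0)
      + (step k F prev m).2.2 j
      - ((step k F prev m).2.1 * ((m.choose j) : ℂ) * Complex.I ^ (m - j)).im
    = bb k F prev m j := by
  set b := bb k F prev m with hb
  set n := m + 1 - k with hn
  set ζ : ℂ := stepz (-(b 0)) (-(b 1 / m)) with hζ
  set c' : ℂ := ζ * (-Complex.I) ^ (m - 1) with hc'
  set r0 : ℝ := b (k-1) + (c' * ((m.choose (k-1)) : ℂ) * Complex.I ^ n).im with hr0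
  set r1 : ℝ := b k + (c' * ((m.choose k) : ℂ) * Complex.I ^ (n-1)).im with hr1
  set ξ : ℂ := stepz (r1 / (k * n)) (-(r0 / k)) with hξ
  set c : ℂ := ξ * (-Complex.I) ^ (n - 1) with hc
  have hstep1 : (step k F prev m).1 = c := rfl
  have hstep2 : (step k F prev m).2.1 = c' := rfl
  have hstep3 : ∀ j, (step k F prev m).2.2 j
      = if j = 0 ∨ j = 1 ∨ j = k - 1 ∨ j = k then 0
        else b j
          - k * (if k - 1 ≤ j then
              (c * ((n.choose (j - (k-1))) : ℂ) * Complex.I ^ (m - j)).re else 0)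
          + (c' * ((m.choose j) : ℂ) * Complex.I ^ (m - j)).im := fun _ => rfl
  rw [hstep1, hstep2, hstep3]
  -- basic facts about the powers of `I`
  have hnm : 2 ≤ n := by omega
  have hcI1 : c' * Complex.I ^ (m - 1) = ζ := by
    rw [hc', mul_assoc, negI_mul_I_pow, mul_one]
  have hImeq : Complex.I ^ m = Complex.I ^ (m - 1) * Complex.I := by
    rw [← pow_succ]; congr 1; omega
  have hcIm : c' * Complex.I ^ m = ζ * Complex.I := by
    rw [hImeq, ← mul_assoc, hcI1]
  have hcI2 : c * Complex.I ^ (n - 1) = ξ := by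
    rw [hc, mul_assoc, negI_mul_I_pow, mul_one]
  have hIneq : Complex.I ^ n = Complex.I ^ (n - 1) * Complex.I := by
    rw [← pow_succ]; congr 1; omega
  have hcIn : c * Complex.I ^ n = ξ * Complex.I := by
    rw [hIneq, ← mul_assoc, hcI2]
  have hm0 : (m : ℝ) ≠ 0 := Nat.cast_ne_zero.mpr (by omega)
  have hk0 : (k : ℝ) ≠ 0 := Nat.cast_ne_zero.mpr (by omega)
  have hn0 : (n : ℝ) ≠ 0 := Nat.cast_ne_zero.mpr (by omega)
  by_cases h0 : j = 0
  · subst h0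
    rw [if_pos (Or.inl rfl), if_neg (show ¬ k - 1 ≤ 0 by omega)]
    rw [Nat.choose_zero_right, Nat.cast_one, mul_one, Nat.sub_zero, hcIm, Complex.mul_I_im,
      stepz_re]
    ring
  by_cases h1 : j = 1
  · subst h1
    rw [if_pos (Or.inr (Or.inl rfl)), if_neg (show ¬ k - 1 ≤ 1 by omega)]
    rw [Nat.choose_one_right]
    have hrw : c' * (m : ℂ) * Complex.I ^ (m - 1) = ((m : ℝ) : ℂ) * ζ := by
      rw [mul_comm c' _, mul_assoc, hcI1]
      push_cast
      ring
    rw [hrw]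
    have him : (((m : ℝ) : ℂ) * ζ).im = (m : ℝ) * ζ.im := by
      simp [Complex.mul_im]
    rw [him, stepz_im]
    field_simp
    ring
  by_cases hkm1 : j = k - 1
  · subst hkm1
    rw [if_pos (Or.inr (Or.inr (Or.inl rfl))), if_pos le_rfl, Nat.sub_self,
      Nat.choose_zero_right, Nat.cast_one, mul_one, show m - (k - 1) = n by omega]
    have hfirst : (k : ℝ) * (c * Complex.I ^ n).re = r0 := by
      rw [hcIn, Complex.mul_I_re, stepz_im]
      field_simp
    rw [hfirst]
    linarith [hr0]
  by_cases hkj : j = k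
  · rw [hkj]
    rw [if_pos (Or.inr (Or.inr (Or.inr rfl))), if_pos (by omega : k - 1 ≤ k),
      show k - (k - 1) = 1 by omega, Nat.choose_one_right, show m - k = n - 1 by omega]
    have hrw : c * (n : ℂ) * Complex.I ^ (n - 1) = ((n : ℝ) : ℂ) * ξ := by
      rw [mul_comm c _, mul_assoc, hcI2]
      push_cast
      ring
    have hfirst : (k : ℝ) * (c * (n : ℂ) * Complex.I ^ (n - 1)).re = r1 := by
      rw [hrw, show (((n : ℝ) : ℂ) * ξ).re = (n : ℝ) * ξ.re by simp [Complex.mul_re], stepz_re]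
      field_simp
    rw [hfirst]
    linarith [hr1]
  · have hnotbad : ¬ (j = 0 ∨ j = 1 ∨ j = k - 1 ∨ j = k) := by
      push_neg
      exact ⟨h0, h1, hkm1, hkj⟩
    rw [if_neg hnotbad]
    ring

/-! ### Properties of the built series -/

lemma bf_low (k : ℕ) (s : ℕ → ℂ × ℂ × (ℕ → ℝ)) : ∀ i ≤ 1, PowerSeries.coeff (R := ℂ) i (bf k s) = 0 := by
  intro i hi
  rw [bf, PowerSeries.coeff_mk, if_neg (by omega)]

lemma bg_low (k : ℕ) (s : ℕ → ℂ × ℂ × (ℕ → ℝ)) : ∀ i ≤ k, PowerSeries.coeff (R := ℂ) i (bg k s) = 0 := by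
  intro i hi
  rw [bg, PowerSeries.coeff_mk, if_neg (by omega)]

lemma coeff_bA (k : ℕ) (s : ℕ → ℂ × ℂ × (ℕ → ℝ)) (d : Fin 2 →₀ ℕ) :
    MvPowerSeries.coeff (R := ℝ) d (bA k s)
      = if k + 1 ≤ dg d then (s (dg d)).2.2 (d 0) else 0 := rfl

lemma bA_tail (k : ℕ) (s : ℕ → ℂ × ℂ × (ℕ → ℝ)) : IsRigidTail k (bA k s) := by
  intro j l hjl
  unfold cfxy
  rw [coeff_bA, if_neg (by rw [dg_pair]; omega)]

lemma bA_norm (k : ℕ) (hk : 2 < k) (F : MvPowerSeries (Fin 2) ℝ) :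
    IsRigidTNormal k (bA k (sol k F)) := by
  intro j l hjl hbad
  unfold cfxy
  rw [coeff_bA, dg_pair, pair_fst]
  rw [if_pos hjl, sol_eq, if_pos hjl]
  exact if_pos hbad

/-- Existence: the constructed data satisfies the equation. -/
lemma exist_P (k : ℕ) (hk : 2 < k) (F : MvPowerSeries (Fin 2) ℝ) (hF : IsRigidTail k F) :
    Pfun k (bf k (sol k F)) (bg k (sol k F)) (bA k (sol k F)) = F := by
  apply MvPowerSeries.ext
  intro d
  set m := dg d with hmdef
  by_cases hlow : m ≤ k
  · rw [lowP hk (bf_low k _) (bg_low k _) (bA_tail k _) hlow, coeff_eq_cfxy]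
    have : d 0 + d 1 ≤ k := by simpa [dg, hmdef] using hlow
    exact (hF _ _ this).symm
  push_neg at hlow
  set n := m + 1 - k with hndef
  have hn : 2 ≤ n := by omega
  have hm : m + 1 = n + k := by omega
  set pr := trc (sol k F) m with hpr
  have hsolm : sol k F m = step k F pr m := by
    rw [sol_eq, if_pos (by omega)]
  -- agreement of the built series with their truncations
  have hfa : ∀ i < n, PowerSeries.coeff (R := ℂ) i (bf k (sol k F)) = PowerSeries.coeff (R := ℂ) i (bf k pr) := by
    intro i hi
    rw [bf, bf, PowerSeries.coeff_mk, PowerSeries.coeff_mk]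
    split_ifs with h2
    · rw [hpr]; unfold trc
      rw [if_pos (by omega)]
    · rfl
  have hga : ∀ i < m, PowerSeries.coeff (R := ℂ) i (bg k (sol k F)) = PowerSeries.coeff (R := ℂ) i (bg k pr) := by
    intro i hi
    rw [bg, bg, PowerSeries.coeff_mk, PowerSeries.coeff_mk]
    split_ifs with h2
    · rw [hpr]; unfold trc
      rw [if_pos hi]
    · rfl
  have hFa : ∀ e : Fin 2 →₀ ℕ, dg e < m →
      MvPowerSeries.coeff (R := ℝ) e (bA k (sol k F)) = MvPowerSeries.coeff (R := ℝ) e (bA k pr) := by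
    intro e hee
    rw [coeff_bA, coeff_bA]
    split_ifs with h2
    · rw [hpr]; unfold trc
      rw [if_pos hee]
    · rfl
  -- top coefficients
  have htf : PowerSeries.coeff (R := ℂ) n (bf k (sol k F)) = (step k F pr m).1 := by
    rw [bf, PowerSeries.coeff_mk, if_pos (by omega), show n + k - 1 = m by omega, hsolm]
  have htf0 : PowerSeries.coeff (R := ℂ) n (bf k pr) = 0 := by
    rw [bf, PowerSeries.coeff_mk, if_pos (by omega : 2 ≤ n), hpr]
    unfold trc
    rw [show n + k - 1 = m by omega, if_neg (by omega)]
    rfl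
  have htg : PowerSeries.coeff (R := ℂ) m (bg k (sol k F)) = (step k F pr m).2.1 := by
    rw [bg, PowerSeries.coeff_mk, if_pos (by omega), hsolm]
  have htg0 : PowerSeries.coeff (R := ℂ) m (bg k pr) = 0 := by
    rw [bg, PowerSeries.coeff_mk]
    split_ifs with h2
    · rw [hpr]; unfold trc
      rw [if_neg (by omega)]
      rfl
    · rfl
  have htA : MvPowerSeries.coeff (R := ℝ) d (bA k (sol k F)) = (step k F pr m).2.2 (d 0) := by
    rw [coeff_bA, ← hmdef, if_pos (by omega), hsolm]
  have htA0 : MvPowerSeries.coeff (R := ℝ) d (bA k pr) = 0 := by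
    rw [coeff_bA, ← hmdef]
    split_ifs with h2
    · rw [hpr]; unfold trc
      rw [if_neg (by omega)]
      rfl
    · rfl
  -- the master formula
  have hmaster := master hk hn hm (bf_low k (sol k F)) (bf_low k pr) hfa hga
    (bA_tail k (sol k F)) (bA_tail k pr) hFa (hmdef ▸ rfl : dg d = m)
  rw [htf, htf0, htg, htg0, htA, htA0, sub_zero, sub_zero, sub_zero] at hmaster
  -- the linear system is solved by `step`
  have hd01 : d 0 + d 1 = m := by simpa [dg] using hmdef.symm
  have hsolve := step_solves hk (by omega : k + 1 ≤ m) F pr (j := d 0) (by omega)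
  rw [show m + 1 - k = n from rfl, show m - d 0 = d 1 by omega] at hsolve
  have hbbval : bb k F pr m (d 0) = MvPowerSeries.coeff (R := ℝ) d F
      - MvPowerSeries.coeff (R := ℝ) d (Pfun k (bf k pr) (bg k pr) (bA k pr)) := by
    rw [bb, show m - d 0 = d 1 by omega, ← coeff_eq_cfxy, ← coeff_eq_cfxy]
  rw [hbbval] at hsolve
  rw [hsolve] at hmaster
  linarith [hmaster]

/-! ### Uniqueness -/

lemma real_mul_im (r : ℝ) (z : ℂ) : (((r : ℝ) : ℂ) * z).im = r * z.im := by
  simp [Complex.mul_im]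

lemma real_mul_re (r : ℝ) (z : ℂ) : (((r : ℝ) : ℂ) * z).re = r * z.re := by
  simp [Complex.mul_re]

lemma nat_mul_shift (w : ℂ) (t q : ℕ) :
    w * (q : ℂ) * Complex.I ^ t = ((q : ℝ) : ℂ) * (w * Complex.I ^ t) := by
  push_cast
  ring

lemma uniq_aux {k : ℕ} (hk : 2 < k)
    {f1 g1 f2 g2 : PowerSeries ℂ} {Fs1 Fs2 : MvPowerSeries (Fin 2) ℝ}
    (hf1 : ∀ i ≤ 1, PowerSeries.coeff (R := ℂ) i f1 = 0) (hf2 : ∀ i ≤ 1, PowerSeries.coeff (R := ℂ) i f2 = 0)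
    (hg1 : ∀ i ≤ k, PowerSeries.coeff (R := ℂ) i g1 = 0) (hg2 : ∀ i ≤ k, PowerSeries.coeff (R := ℂ) i g2 = 0)
    (ht1 : IsRigidTail k Fs1) (ht2 : IsRigidTail k Fs2)
    (hnm1 : IsRigidTNormal k Fs1) (hnm2 : IsRigidTNormal k Fs2)
    (hP : Pfun k f1 g1 Fs1 = Pfun k f2 g2 Fs2) :
    f1 = f2 ∧ g1 = g2 ∧ Fs1 = Fs2 := by
  have claim : ∀ m : ℕ,
      (∀ i, 2 ≤ i → i + k - 1 = m → PowerSeries.coeff (R := ℂ) i f1 = PowerSeries.coeff (R := ℂ) i f2)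
      ∧ PowerSeries.coeff (R := ℂ) m g1 = PowerSeries.coeff (R := ℂ) m g2
      ∧ ∀ e : Fin 2 →₀ ℕ, dg e = m →
          MvPowerSeries.coeff (R := ℝ) e Fs1 = MvPowerSeries.coeff (R := ℝ) e Fs2 := by
    intro m
    induction m using Nat.strong_induction_on with
    | _ m IH =>
    by_cases hlow : m ≤ k
    · refine ⟨fun i h2 hik => absurd hik (by omega),
        by rw [hg1 m hlow, hg2 m hlow], fun e he => ?_⟩
      have hDe : e 0 + e 1 ≤ k := by
        have : dg e = e 0 + e 1 := rfl
        omega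
      rw [coeff_eq_cfxy, coeff_eq_cfxy, ht1 _ _ hDe, ht2 _ _ hDe]
    push_neg at hlow
    set n := m + 1 - k with hndef
    have hn : 2 ≤ n := by omega
    have hm : m + 1 = n + k := by omega
    have hfa : ∀ i < n, PowerSeries.coeff (R := ℂ) i f1 = PowerSeries.coeff (R := ℂ) i f2 := by
      intro i hi
      by_cases h2 : 2 ≤ i
      · exact (IH (i + k - 1) (by omega)).1 i h2 rfl
      · rw [hf1 i (by omega), hf2 i (by omega)]
    have hga : ∀ i < m, PowerSeries.coeff (R := ℂ) i g1 = PowerSeries.coeff (R := ℂ) i g2 := by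
      intro i hi
      by_cases h2 : i ≤ k
      · rw [hg1 i h2, hg2 i h2]
      · exact (IH i hi).2.1
    have hFa : ∀ e : Fin 2 →₀ ℕ, dg e < m →
        MvPowerSeries.coeff (R := ℝ) e Fs1 = MvPowerSeries.coeff (R := ℝ) e Fs2 :=
      fun e he => (IH (dg e) he).2.2 e rfl
    set wg := PowerSeries.coeff (R := ℂ) m g1 - PowerSeries.coeff (R := ℂ) m g2 with hwg
    set wf := PowerSeries.coeff (R := ℂ) n f1 - PowerSeries.coeff (R := ℂ) n f2 with hwf
    have hmaster : ∀ d : Fin 2 →₀ ℕ, dg d = m →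
        (0 : ℝ) = (k : ℝ) * (if k - 1 ≤ d 0 then
            (wf * ((n.choose (d 0 - (k-1))) : ℂ) * Complex.I ^ (d 1)).re else 0)
          + (MvPowerSeries.coeff (R := ℝ) d Fs1 - MvPowerSeries.coeff (R := ℝ) d Fs2)
          - (wg * ((m.choose (d 0)) : ℂ) * Complex.I ^ (d 1)).im := by
      intro d hd
      have h := master hk hn hm hf1 hf2 hfa hga ht1 ht2 hFa hd
      rw [hP, sub_self] at h
      rw [← hwg, ← hwf] at h
      exact h
    -- kill `wg` using the slots `j = 0, 1`
    have h00 := hmaster (single 0 0 + single 1 m) (by rw [dg_pair]; omega)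
    rw [pair_fst, pair_snd, if_neg (by omega : ¬ k - 1 ≤ 0)] at h00
    rw [coeff_eq_cfxy, coeff_eq_cfxy, pair_fst, pair_snd,
      hnm1 0 m (by omega) (Or.inl rfl), hnm2 0 m (by omega) (Or.inl rfl)] at h00
    rw [Nat.choose_zero_right, Nat.cast_one, mul_one] at h00
    have him0 : (wg * Complex.I ^ m).im = 0 := by linarith [h00]
    have h01 := hmaster (single 0 1 + single 1 (m - 1)) (by rw [dg_pair]; omega)
    rw [pair_fst, pair_snd, if_neg (by omega : ¬ k - 1 ≤ 1)] at h01
    rw [coeff_eq_cfxy, coeff_eq_cfxy, pair_fst, pair_snd,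
      hnm1 1 (m-1) (by omega) (Or.inr (Or.inl rfl)),
      hnm2 1 (m-1) (by omega) (Or.inr (Or.inl rfl))] at h01
    rw [Nat.choose_one_right, nat_mul_shift, real_mul_im] at h01
    have him1 : (wg * Complex.I ^ (m - 1)).im = 0 := by
      have hm0 : (m : ℝ) ≠ 0 := Nat.cast_ne_zero.mpr (by omega)
      have : (m : ℝ) * (wg * Complex.I ^ (m - 1)).im = 0 := by linarith [h01]
      exact (mul_eq_zero.mp this).resolve_left hm0
    have hwg0 : wg = 0 := by
      apply im_pair_zero him1
      rw [show m - 1 + 1 = m by omega]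
      exact him0
    -- kill `wf` using the slots `j = k - 1, k`
    have hk1 := hmaster (single 0 (k-1) + single 1 (m - (k-1))) (by rw [dg_pair]; omega)
    rw [pair_fst, pair_snd, if_pos le_rfl, Nat.sub_self, Nat.choose_zero_right, Nat.cast_one,
      mul_one] at hk1
    rw [coeff_eq_cfxy, coeff_eq_cfxy, pair_fst, pair_snd,
      hnm1 (k-1) (m - (k-1)) (by omega) (Or.inr (Or.inr (Or.inl rfl))),
      hnm2 (k-1) (m - (k-1)) (by omega) (Or.inr (Or.inr (Or.inl rfl))), hwg0] at hk1
    simp only [zero_mul, Complex.zero_im, sub_zero, sub_self, add_zero] at hk1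
    have hre0 : (wf * Complex.I ^ (m - (k-1))).re = 0 := by
      have hk0 : (k : ℝ) ≠ 0 := Nat.cast_ne_zero.mpr (by omega)
      have := hk1.symm
      exact (mul_eq_zero.mp this).resolve_left hk0
    have hkk := hmaster (single 0 k + single 1 (m - k)) (by rw [dg_pair]; omega)
    rw [pair_fst, pair_snd, if_pos (by omega : k - 1 ≤ k), show k - (k-1) = 1 by omega,
      Nat.choose_one_right, nat_mul_shift, real_mul_re] at hkk
    rw [coeff_eq_cfxy, coeff_eq_cfxy, pair_fst, pair_snd,
      hnm1 k (m - k) (by omega) (Or.inr (Or.inr (Or.inr rfl))),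
      hnm2 k (m - k) (by omega) (Or.inr (Or.inr (Or.inr rfl))), hwg0] at hkk
    simp only [zero_mul, Complex.zero_im, sub_zero, sub_self, add_zero] at hkk
    have hre1 : (wf * Complex.I ^ (m - k)).re = 0 := by
      have hk0 : (k : ℝ) ≠ 0 := Nat.cast_ne_zero.mpr (by omega)
      have hn0 : (n : ℝ) ≠ 0 := Nat.cast_ne_zero.mpr (by omega)
      have h' : (k : ℝ) * ((n : ℝ) * (wf * Complex.I ^ (m - k)).re) = 0 := hkk.symm
      rcases mul_eq_zero.mp h' with h | h
      · exact absurd h hk0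
      · exact (mul_eq_zero.mp h).resolve_left hn0
    have hwf0 : wf = 0 := by
      apply re_pair_zero hre1
      rw [show m - k + 1 = m - (k - 1) by omega]
      exact hre0
    -- conclude
    refine ⟨fun i h2 hik => ?_, eq_of_sub_eq_zero hwg0, fun e he => ?_⟩
    · have : i = n := by omega
      rw [this]
      exact eq_of_sub_eq_zero hwf0
    · have h := hmaster e he
      rw [hwf0, hwg0] at h
      simp only [zero_mul, Complex.zero_re, Complex.zero_im, ite_self, mul_zero, zero_add,
        sub_zero] at h
      exact eq_of_sub_eq_zero h.symm
  refine ⟨PowerSeries.ext fun i => ?_, PowerSeries.ext fun i => (claim i).2.1,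
    MvPowerSeries.ext fun e => (claim (dg e)).2.2 e rfl⟩
  by_cases h2 : 2 ≤ i
  · exact (claim (i + k - 1)).1 i h2 rfl
  · rw [hf1 i (by omega), hf2 i (by omega)]

/-- Lemma 4.1: a rigid defining series with tube model is taken to rigid
t-normal form by a unique transformation `(z + Σ_{i≥2} f_i z^i, w + Σ_{i≥k+1} g_i z^i)`. -/
theorem rigid_tNormalForm_exists_unique (k : ℕ) (hk : 2 < k)
    (F : MvPowerSeries (Fin 2) ℝ) (hF : IsRigidTail k F) :
    ∃! t : PowerSeries ℂ × PowerSeries ℂ × MvPowerSeries (Fin 2) ℝ,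
      (∀ i : ℕ, i ≤ 1 → PowerSeries.coeff (R := ℂ) i t.1 = 0) ∧
      (∀ i : ℕ, i ≤ k → PowerSeries.coeff (R := ℂ) i t.2.1 = 0) ∧
      IsRigidTail k t.2.2 ∧ IsRigidTNormal k t.2.2 ∧
      (X 0 + reP (oSubst zxy t.1)) ^ k
          + mSubst ![X 0 + reP (oSubst zxy t.1), X 1 + imP (oSubst zxy t.1)] t.2.2
        = X 0 ^ k + F + imP (oSubst zxy t.2.1) := by
  have hexist := exist_P k hk F hF
  refine ⟨(bf k (sol k F), bg k (sol k F), bA k (sol k F)),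
    ⟨bf_low k _, bg_low k _, bA_tail k _, bA_norm k hk F, ?_⟩, ?_⟩
  · unfold Pfun at hexist
    linear_combination hexist
  · rintro ⟨y1, y2, y3⟩ ⟨hy1, hy2, hy3, hy4, hy5⟩
    have hyP : Pfun k y1 y2 y3 = F := by
      unfold Pfun
      linear_combination hy5
    obtain ⟨e1, e2, e3⟩ := uniq_aux hk hy1 (bf_low k _) hy2 (bg_low k _) hy3 (bA_tail k _)
      hy4 (bA_norm k hk F) (hyP.trans hexist.symm)
    simp only [Prod.mk.injEq]
    exact ⟨e1, e2, e3⟩
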